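/- The symmetric group on n letters (n ≥ 2) contains exactly 2^{n-2} distinct Coxeter elements, i.e. elements expressible as a product of the simple transpositions s_1, ..., s_{n-1} in which each s_i appears exactly once. -/

import Mathlib

open Equiv List

noncomputable def wprod (l : List ℕ) : Equiv.Perm ℕ :=
  (l.map (fun i => Equiv.swap i (i + 1))).prod

def cox (m : ℕ) : Set (Equiv.Perm ℕ) :=
  {w | ∃ l : List ℕ, l.Perm (List.range' 1 m) ∧ w = wprod l}

lemma wprod_cons (i : ℕ) (l : List ℕ) :
    wprod (i :: l) = Equiv.swap i (i + 1) * wprod l := by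
  simp [wprod]

lemma wprod_fix {l : List ℕ} {k : ℕ} (h : ∀ i ∈ l, i + 1 ≤ k) {x : ℕ} (hx : k < x) :
    wprod l x = x := by
  induction l with
  | nil => simp [wprod]
  | cons i l ih =>
    rw [wprod_cons, Equiv.Perm.mul_apply, ih (fun j hj => h j (mem_cons_of_mem _ hj))]
    have hi := h i mem_cons_self
    rw [Equiv.swap_apply_of_ne_of_ne] <;> omega

lemma wprod_le {l : List ℕ} {k : ℕ} (h : ∀ i ∈ l, i + 1 ≤ k) {x : ℕ} (hx : x ≤ k) :
    wprod l x ≤ k := by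
  induction l with
  | nil => simpa [wprod]
  | cons i l ih =>
    rw [wprod_cons, Equiv.Perm.mul_apply]
    have hy := ih (fun j hj => h j (mem_cons_of_mem _ hj))
    have hi := h i mem_cons_self
    rw [Equiv.swap_apply_def]
    split_ifs <;> omega

lemma commute_swap {i j : ℕ} (h : i + 1 < j) :
    Commute (Equiv.swap i (i + 1)) (Equiv.swap j (j + 1)) := by
  have : ∀ x, (Equiv.swap i (i+1) * Equiv.swap j (j+1)) x
      = (Equiv.swap j (j+1) * Equiv.swap i (i+1)) x := by
    intro x
    simp only [Equiv.Perm.mul_apply, Equiv.swap_apply_def]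
    split_ifs <;> omega
  exact Equiv.ext this

lemma wprod_append (a b : List ℕ) : wprod (a ++ b) = wprod a * wprod b := by
  simp [wprod]

lemma wprod_move_front {a b : List ℕ} {j : ℕ} (h : ∀ i ∈ a, i + 1 < j) :
    wprod (a ++ j :: b) = Equiv.swap j (j + 1) * wprod (a ++ b) := by
  have hc : Commute (wprod a) (Equiv.swap j (j + 1)) := by
    apply Commute.list_prod_left
    intro p hp
    simp only [List.mem_map, wprod] at hp
    obtain ⟨i, hi, rfl⟩ := hp
    exact commute_swap (h i hi)
  rw [wprod_append, wprod_cons, wprod_append, ← mul_assoc, hc.eq, mul_assoc]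

lemma wprod_move_back {a b : List ℕ} {j : ℕ} (h : ∀ i ∈ b, i + 1 < j) :
    wprod (a ++ j :: b) = wprod (a ++ b) * Equiv.swap j (j + 1) := by
  have hc : Commute (Equiv.swap j (j + 1)) (wprod b) := by
    apply Commute.list_prod_right
    intro p hp
    simp only [List.mem_map, wprod] at hp
    obtain ⟨i, hi, rfl⟩ := hp
    exact (commute_swap (h i hi)).symm
  rw [wprod_append, wprod_cons, wprod_append, ← mul_assoc, mul_assoc, hc.eq, ← mul_assoc]

lemma mem_le_of_perm {l : List ℕ} {m : ℕ} (hl : l.Perm (List.range' 1 m)) :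
    ∀ i ∈ l, i + 1 ≤ m + 1 := by
  intro i hi
  have := hl.mem_iff.mp hi
  rw [List.mem_range'_1] at this
  omega

lemma nodup_of_perm {l : List ℕ} {m : ℕ} (hl : l.Perm (List.range' 1 m)) : l.Nodup :=
  hl.symm.nodup (List.nodup_range' 1 Nat.one_pos)

/-- A Coxeter element of `S_{m+1}` (gens `1..m`) moves `m+1` down. -/
lemma cox_top_lt {m : ℕ} (hm : 1 ≤ m) {w : Equiv.Perm ℕ} (hw : w ∈ cox m) :
    w (m + 1) ≤ m := by
  obtain ⟨l, hl, rfl⟩ := hw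
  have hmem : m ∈ l := hl.mem_iff.mpr (by rw [List.mem_range'_1]; omega)
  obtain ⟨a, b, rfl⟩ := List.append_of_mem hmem
  have hnd := nodup_of_perm hl
  have hle := mem_le_of_perm hl
  have hna : m ∉ a := by
    intro h; exact (List.disjoint_of_nodup_append hnd h) mem_cons_self
  have hnb : m ∉ b := by
    have := (List.nodup_append.mp hnd).2.1
    exact (List.nodup_cons.mp this).1
  have hbfix : wprod b (m + 1) = m + 1 := by
    apply wprod_fix (k := m)
    · intro i hi
      have h1 := hle i (by simp [hi])
      have : i ≠ m := fun h => hnb (h ▸ hi)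
      omega
    · omega
  rw [wprod_append, wprod_cons, Equiv.Perm.mul_apply, Equiv.Perm.mul_apply, hbfix,
    Equiv.swap_apply_right]
  apply wprod_le (k := m) _ (le_refl m)
  intro i hi
  have h1 := hle i (by simp [hi])
  have : i ≠ m := fun h => hna (h ▸ hi)
  omega

lemma cox_fix_top {m : ℕ} {w : Equiv.Perm ℕ} (hw : w ∈ cox m) :
    w (m + 2) = m + 2 := by
  obtain ⟨l, hl, rfl⟩ := hw
  exact wprod_fix (mem_le_of_perm hl) (by omega)

lemma cox_succ (m : ℕ) (hm : 1 ≤ m) :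
    cox (m + 1) = (fun w => Equiv.swap (m + 1) (m + 2) * w) '' cox m ∪
      (fun w => w * Equiv.swap (m + 1) (m + 2)) '' cox m := by
  have hrange : List.range' 1 (m + 1) = List.range' 1 m ++ [m + 1] := by
    rw [List.range'_1_concat]; ring_nf
  ext w
  constructor
  · rintro ⟨l, hl, rfl⟩
    have hmem : m + 1 ∈ l := hl.mem_iff.mpr (by rw [List.mem_range'_1]; omega)
    obtain ⟨a, b, rfl⟩ := List.append_of_mem hmem
    have hnd := nodup_of_perm hl
    have hle := mem_le_of_perm hl
    have hna : m + 1 ∉ a := by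
      intro h; exact (List.disjoint_of_nodup_append hnd h) mem_cons_self
    have hnb : m + 1 ∉ b := by
      have := (List.nodup_append.mp hnd).2.1
      exact (List.nodup_cons.mp this).1
    have hperm : (a ++ b).Perm (List.range' 1 m) := by
      have h1 : (a ++ (m + 1) :: b).Perm ((m + 1) :: (a ++ b)) := List.perm_middle
      have h2 : (List.range' 1 (m + 1)).Perm ((m + 1) :: List.range' 1 m) := by
        rw [hrange]; exact List.perm_append_comm.trans (by simp)
      exact ((h1.symm.trans hl).trans h2).cons_inv
    by_cases hma : m ∈ a
    · -- m before m+1 : move m+1 to the back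
      right
      refine ⟨wprod (a ++ b), ⟨a ++ b, hperm, rfl⟩, ?_⟩
      have : ∀ i ∈ b, i + 1 < m + 1 := by
        intro i hi
        have h1 := hle i (by simp [hi])
        have h2 : i ≠ m + 1 := fun h => hnb (h ▸ hi)
        have h3 : i ≠ m := by
          intro h
          have := List.disjoint_of_nodup_append hnd hma
          exact this (by simp [h ▸ hi])
        omega
      simp [wprod_move_back this]
    · left
      refine ⟨wprod (a ++ b), ⟨a ++ b, hperm, rfl⟩, ?_⟩
      have : ∀ i ∈ a, i + 1 < m + 1 := by
        intro i hi
        have h1 := hle i (by simp [hi])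
        have h2 : i ≠ m + 1 := fun h => hna (h ▸ hi)
        have h3 : i ≠ m := fun h => hma (h ▸ hi)
        omega
      simp [wprod_move_front this]
  · rintro (⟨w', ⟨l, hl, rfl⟩, rfl⟩ | ⟨w', ⟨l, hl, rfl⟩, rfl⟩)
    · exact ⟨(m + 1) :: l, by
        rw [hrange]
        exact (hl.cons (m + 1)).trans (List.perm_append_comm.trans (by simp)).symm,
        (wprod_cons _ _).symm⟩
    · exact ⟨l ++ [m + 1], by rw [hrange]; exact hl.append_right _, by
        rw [wprod_append]; simp [wprod]⟩

lemma cox_finite (m : ℕ) : (cox m).Finite := by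
  have : cox m = wprod '' {l | l ∈ (List.range' 1 m).permutations} := by
    ext w
    simp only [cox, Set.mem_image, Set.mem_setOf_eq, List.mem_permutations]
    exact ⟨fun ⟨l, h1, h2⟩ => ⟨l, h1, h2.symm⟩, fun ⟨l, h1, h2⟩ => ⟨l, h1, h2.symm⟩⟩
  rw [this]
  exact ((List.range' 1 m).permutations.finite_toSet).image _

lemma cox_card : ∀ m : ℕ, 1 ≤ m → (cox m).ncard = 2 ^ (m - 1) := by
  intro m hm
  induction m, hm using Nat.le_induction with
  | base =>
    have : cox 1 = {Equiv.swap 1 2} := by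
      ext w
      simp only [cox, Set.mem_setOf_eq, Set.mem_singleton_iff]
      constructor
      · rintro ⟨l, hl, rfl⟩
        rw [show List.range' 1 1 = [1] from rfl, List.perm_singleton] at hl
        subst hl
        simp [wprod]
      · rintro rfl
        exact ⟨[1], by simp, by simp [wprod]⟩
    rw [this]; simp
  | succ m hm ih =>
    rw [cox_succ m hm]
    have hinjl : Function.Injective (fun w : Equiv.Perm ℕ => Equiv.swap (m + 1) (m + 2) * w) :=
      fun a b h => by simpa using mul_left_cancel h
    have hinjr : Function.Injective (fun w : Equiv.Perm ℕ => w * Equiv.swap (m + 1) (m + 2)) :=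
      fun a b h => by simpa using mul_right_cancel h
    have hdisj : Disjoint ((fun w => Equiv.swap (m + 1) (m + 2) * w) '' cox m)
        ((fun w => w * Equiv.swap (m + 1) (m + 2)) '' cox m) := by
      rw [Set.disjoint_left]
      rintro x ⟨w1, hw1, rfl⟩ ⟨w2, hw2, heq⟩
      have h1 : (Equiv.swap (m + 1) (m + 2) * w1) (m + 2) = m + 1 := by
        rw [Equiv.Perm.mul_apply, cox_fix_top hw1, Equiv.swap_apply_right]
      have h2 : (w2 * Equiv.swap (m + 1) (m + 2)) (m + 2) = w2 (m + 1) := by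
        rw [Equiv.Perm.mul_apply, Equiv.swap_apply_right]
      have h3 := cox_top_lt hm hw2
      simp only [] at heq
      rw [heq, h1] at h2
      omega
    rw [Set.ncard_union_eq hdisj ((cox_finite m).image _) ((cox_finite m).image _),
      Set.ncard_image_of_injective _ hinjl, Set.ncard_image_of_injective _ hinjr, ih]
    have : m + 1 - 1 = (m - 1) + 1 := by omega
    rw [this, pow_succ]
    ring

theorem card_coxeter_elements (n : ℕ) (hn : 2 ≤ n) :
    {w : Equiv.Perm ℕ | ∃ l : List ℕ, l.Perm (List.range' 1 (n - 1)) ∧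
      w = (l.map (fun i => Equiv.swap i (i + 1))).prod}.ncard = 2 ^ (n - 2) := by
  have h := cox_card (n - 1) (by omega)
  have hn2 : n - 1 - 1 = n - 2 := by omega
  rw [hn2] at h
  exact h
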